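/- Let d ≥ 2 and let A ⊆ ℝ^d be an infinite set whose distance set satisfies Δ(A) ⊆ ℤ⁺ (all pairwise distances between distinct points of A are positive integers). Then A is contained in a line. -/

import Mathlib

open Filter RealInnerProductSpace

private lemma ultra_lim_mem {X : Type*} [TopologicalSpace X] {s : Set X}
    (hs : IsCompact s) (φ : Ultrafilter ℕ) {g : ℕ → X}
    (hg : ∀ᶠ n in (φ : Filter ℕ), g n ∈ s) :
    ∃ L ∈ s, Tendsto g (φ : Filter ℕ) (nhds L) := by
  obtain ⟨L, hLs, hL⟩ := hs.ultrafilter_le_nhds (φ.map g)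
    (by rw [Ultrafilter.coe_map, le_principal_iff, mem_map]; exact hg)
  exact ⟨L, hLs, hL⟩

private lemma ultra_lim_real (φ : Ultrafilter ℕ) {g : ℕ → ℝ} {C : ℝ}
    (h : ∀ᶠ n in (φ : Filter ℕ), |g n| ≤ C) :
    ∃ L : ℝ, Tendsto g (φ : Filter ℕ) (nhds L) := by
  obtain ⟨L, _, hL⟩ := ultra_lim_mem (isCompact_Icc (a := -C) (b := C)) φ
    (h.mono fun n hn => Set.mem_Icc.mpr (abs_le.mp hn))
  exact ⟨L, hL⟩

private lemma ultra_int_const (φ : Ultrafilter ℕ) {g : ℕ → ℝ} {L : ℝ}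
    (hg : Tendsto g (φ : Filter ℕ) (nhds L))
    (hz : ∀ᶠ n in (φ : Filter ℕ), ∃ z : ℤ, g n = z) :
    (∀ᶠ n in (φ : Filter ℕ), g n = L) ∧ ∃ z : ℤ, L = z := by
  have h2 : ∀ᶠ n in (φ : Filter ℕ), dist (g n) L < 1/2 :=
    hg (Metric.ball_mem_nhds L (by norm_num))
  obtain ⟨n₀, hd₀, z₀, hz₀⟩ := (h2.and hz).exists
  have h4 : ∀ᶠ n in (φ : Filter ℕ), g n = (z₀ : ℝ) := by
    filter_upwards [h2, hz] with n hd hz'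
    obtain ⟨z, hzz⟩ := hz'
    have h5 : |(z : ℝ) - (z₀ : ℝ)| < 1 := by
      have e1 : |g n - L| < 1/2 := by rwa [Real.dist_eq] at hd
      have e2 : |g n₀ - L| < 1/2 := by rwa [Real.dist_eq] at hd₀
      rw [hzz] at e1; rw [hz₀] at e2
      calc |(z:ℝ) - z₀| = |((z:ℝ) - L) + (L - z₀)| := by ring_nf
        _ ≤ |(z:ℝ) - L| + |L - z₀| := abs_add_le _ _
        _ < 1 := by rw [abs_sub_comm L (z₀:ℝ)] at *; linarith
    have h6 : |z - z₀| < (1 : ℤ) := by exact_mod_cast (by push_cast; exact h5 : |((z - z₀ : ℤ) : ℝ)| < 1)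
    have : z = z₀ := by rw [abs_lt] at h6; omega
    rw [hzz, this]
  have hL0 : L = (z₀ : ℝ) :=
    tendsto_nhds_unique hg (Tendsto.congr' (h4.mono fun n hn => hn.symm) tendsto_const_nhds)
  exact ⟨by rw [hL0]; exact h4, z₀, hL0⟩

set_option maxHeartbeats 1000000 in
/-- **Anning–Erdős theorem.**
For `d ≥ 2`, an infinite set `A ⊆ ℝᵈ` all of whose pairwise distances are
positive integers is contained in a line. -/
theorem anning_erdos (d : ℕ) (hd : 2 ≤ d) (A : Set (EuclideanSpace ℝ (Fin d)))
    (hinf : A.Infinite)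
    (hA : ∀ a ∈ A, ∀ a' ∈ A, a ≠ a' → ∃ n : ℕ, 0 < n ∧ dist a a' = (n : ℝ)) :
    Collinear ℝ A := by
  classical
  -- integer distances
  have hint : ∀ p ∈ A, ∀ q ∈ A, p ≠ q → (∃ z : ℤ, dist p q = z) ∧ 1 ≤ dist p q := by
    intro p hp q hq hne
    obtain ⟨n, hn, h⟩ := hA p hp q hq hne
    exact ⟨⟨(n : ℤ), by rw [h]; norm_num⟩, by rw [h]; exact_mod_cast hn⟩
  obtain ⟨a, ha⟩ := hinf.nonempty
  -- unboundedness
  have hub : ∀ c : ℝ, ∃ p ∈ A, c ≤ dist p a := by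
    intro c
    by_contra hcon
    push_neg at hcon
    have hsub : A ⊆ Metric.closedBall a c := fun p hp => Metric.mem_closedBall.mpr (hcon p hp).le
    obtain ⟨t, ht⟩ := (isCompact_closedBall a c).elim_finite_subcover
      (fun y : EuclideanSpace ℝ (Fin d) => Metric.ball y (1/2))
      (fun y => Metric.isOpen_ball)
      (fun y hy => Set.mem_iUnion.mpr ⟨y, Metric.mem_ball_self (by norm_num)⟩)
    have hball : ∀ y : EuclideanSpace ℝ (Fin d), (A ∩ Metric.ball y (1/2)).Finite := by
      intro y
      apply Set.Subsingleton.finite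
      rintro p ⟨hp1, hp2⟩ q ⟨hq1, hq2⟩
      by_contra hne
      have h1 := (hint p hp1 q hq1 hne).2
      have hb1 := Metric.mem_ball.mp hp2
      have hb2 := Metric.mem_ball.mp hq2
      have h2 : dist p q < 1 := by
        calc dist p q ≤ dist p y + dist y q := dist_triangle _ _ _
          _ < 1 := by rw [dist_comm y q]; linarith
      linarith
    have hfin : A.Finite := by
      refine Set.Finite.subset (Set.Finite.biUnion t.finite_toSet
        (fun y _ => hball y)) (fun p hp => ?_)
      obtain ⟨y, hy, hy2⟩ := Set.mem_iUnion₂.mp (ht (hsub hp))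
      exact Set.mem_iUnion₂.mpr ⟨y, hy, hp, hy2⟩
    exact hinf hfin
  choose x hxA hxd using fun n : ℕ => hub ((n : ℝ) + 1)
  set φ := Filter.hyperfilter ℕ with hφ
  set f : ℕ → ℝ := fun n => dist (x n) a with hf
  have hfn : ∀ n : ℕ, (n : ℝ) + 1 ≤ f n := hxd
  have hfpos : ∀ n, 0 < f n := fun n => lt_of_lt_of_le (by positivity) (hfn n)
  have hxa : ∀ n, x n ≠ a := by
    intro n h
    have := hfpos n
    rw [hf] at this; simp [h] at this
  have hftop : Tendsto f (φ : Filter ℕ) atTop := by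
    refine Tendsto.mono_left ?_ Nat.hyperfilter_le_atTop
    refine tendsto_atTop_mono (fun n => ?_) tendsto_natCast_atTop_atTop
    have := hfn n; linarith
  have hne_ae : ∀ p : EuclideanSpace ℝ (Fin d), ∀ᶠ n in (φ : Filter ℕ), x n ≠ p := by
    intro p
    refine Eventually.filter_mono Nat.hyperfilter_le_atTop ?_
    rw [eventually_atTop]
    refine ⟨Nat.ceil (dist p a), fun n hn he => ?_⟩
    have h1 : (n : ℝ) + 1 ≤ dist (x n) a := hfn n
    rw [he] at h1
    have hc : dist p a ≤ (Nat.ceil (dist p a) : ℝ) := Nat.le_ceil _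
    have hn' : (Nat.ceil (dist p a) : ℝ) ≤ (n : ℝ) := by exact_mod_cast hn
    linarith
  have key : ∀ p : EuclideanSpace ℝ (Fin d), p ∈ A →
      ∃ LL : ℝ, (∃ z : ℤ, LL = z) ∧ (∀ᶠ n in (φ : Filter ℕ), dist (x n) p = f n - LL) := by
    intro p hp
    have hbdd : ∀ᶠ n in (φ : Filter ℕ), |f n - dist (x n) p| ≤ dist a p :=
      Eventually.of_forall fun n => by
        have h := abs_dist_sub_le a p (x n)
        rw [dist_comm a (x n), dist_comm p (x n)] at h
        exact h
    obtain ⟨LL, hL⟩ := ultra_lim_real φ hbdd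
    have hz : ∀ᶠ n in (φ : Filter ℕ), ∃ z : ℤ, f n - dist (x n) p = z := by
      filter_upwards [hne_ae p] with n hne
      obtain ⟨z1, hz1⟩ := (hint (x n) (hxA n) a ha (hxa n)).1
      obtain ⟨z2, hz2⟩ := (hint (x n) (hxA n) p hp hne).1
      exact ⟨z1 - z2, by push_cast; rw [← hz1, ← hz2]⟩
    obtain ⟨hconst, z, hLz⟩ := ultra_int_const φ hL hz
    exact ⟨LL, ⟨z, hLz⟩, hconst.mono fun n hn => by linarith⟩
  choose L hLz hLd using key
  have star : ∀ p : EuclideanSpace ℝ (Fin d), ∀ LL : ℝ,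
      (∀ᶠ n in (φ : Filter ℕ), dist (x n) p = f n - LL) →
      ∀ᶠ n in (φ : Filter ℕ),
        ⟪x n - a, p - a⟫ = LL * f n + (dist p a ^ 2 - LL ^ 2) / 2 := by
    intro p LL hLL
    filter_upwards [hLL] with n hn
    have h1 : ‖(x n - a) - (p - a)‖ ^ 2
        = ‖x n - a‖ ^ 2 - 2 * ⟪x n - a, p - a⟫ + ‖p - a‖ ^ 2 := norm_sub_sq_real _ _
    have h2 : (x n - a) - (p - a) = x n - p := by abel
    rw [h2] at h1
    have h3 : ‖x n - p‖ = f n - LL := by rw [← dist_eq_norm]; exact hn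
    have h4 : ‖x n - a‖ = f n := by rw [← dist_eq_norm]
    have h5 : ‖p - a‖ = dist p a := by rw [← dist_eq_norm]
    rw [h3, h4, h5] at h1
    linear_combination h1 / 2
  have hnorm1 : ∀ n : ℕ, ‖(f n)⁻¹ • (x n - a)‖ = 1 := by
    intro n
    rw [norm_smul, Real.norm_eq_abs, abs_of_pos (inv_pos.mpr (hfpos n)), ← dist_eq_norm]
    exact inv_mul_cancel₀ (hfpos n).ne'
  obtain ⟨u, hu1, hu2⟩ := ultra_lim_mem (isCompact_sphere (0 : EuclideanSpace ℝ (Fin d)) 1) φ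
    (g := fun n => (f n)⁻¹ • (x n - a))
    (Eventually.of_forall fun n => by rw [mem_sphere_zero_iff_norm]; exact hnorm1 n)
  rw [mem_sphere_zero_iff_norm] at hu1
  have hip : ∀ p : EuclideanSpace ℝ (Fin d), ∀ LL : ℝ,
      (∀ᶠ n in (φ : Filter ℕ), dist (x n) p = f n - LL) → ⟪u, p - a⟫ = LL := by
    intro p LL hLL
    have t1 : Tendsto (fun n => ⟪(f n)⁻¹ • (x n - a), p - a⟫) (φ : Filter ℕ)
        (nhds ⟪u, p - a⟫) := hu2.inner tendsto_const_nhds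
    have t2 : Tendsto (fun n => ⟪(f n)⁻¹ • (x n - a), p - a⟫) (φ : Filter ℕ) (nhds LL) := by
      have he : ∀ᶠ n in (φ : Filter ℕ), ⟪(f n)⁻¹ • (x n - a), p - a⟫
          = LL + (dist p a ^ 2 - LL ^ 2) / 2 * (f n)⁻¹ := by
        filter_upwards [star p LL hLL] with n hn
        rw [real_inner_smul_left, hn]
        have hf0 : f n ≠ 0 := (hfpos n).ne'
        field_simp
      rw [tendsto_congr' he]
      have hz0 : Tendsto (fun n => (f n)⁻¹) (φ : Filter ℕ) (nhds 0) := hftop.inv_tendsto_atTop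
      simpa using tendsto_const_nhds.add (tendsto_const_nhds.mul hz0)
    exact tendsto_nhds_unique t1 t2
  set K : ℕ → ℝ := fun n => L (x n) (hxA n) with hK
  have hKd : ∀ m : ℕ, ∀ᶠ n in (φ : Filter ℕ), dist (x n) (x m) = f n - K m :=
    fun m => hLd (x m) (hxA m)
  have hKu : ∀ m : ℕ, ⟪u, x m - a⟫ = K m := fun m => hip (x m) (K m) (hKd m)
  have hKz : ∀ m : ℕ, ∃ z : ℤ, K m = z := fun m => hLz (x m) (hxA m)
  set v : ℕ → EuclideanSpace ℝ (Fin d) := fun n => (x n - a) - K n • u with hv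
  have hxv : ∀ n : ℕ, x n - a = v n + K n • u := fun n => by rw [hv]; exact (sub_add_cancel _ _).symm
  have huu : ⟪u, u⟫ = 1 := by rw [real_inner_self_eq_norm_sq, hu1]; norm_num
  have hvu : ∀ n : ℕ, ⟪u, v n⟫ = 0 := by
    intro n
    rw [hv]
    rw [inner_sub_right, real_inner_smul_right, hKu, huu]
    ring
  have hKf : ∀ n : ℕ, |K n| ≤ f n := by
    intro n
    have h := abs_real_inner_le_norm u (x n - a)
    rw [hKu, hu1, ← dist_eq_norm] at h
    simpa using h
  have hfint : ∀ n : ℕ, ∃ z : ℤ, f n = z := fun n => (hint (x n) (hxA n) a ha (hxa n)).1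
  have hvsq : ∀ n : ℕ, ‖v n‖ ^ 2 = f n ^ 2 - K n ^ 2 := by
    intro n
    rw [hv]
    rw [norm_sub_sq_real, real_inner_smul_right, real_inner_comm u (x n - a), hKu,
      norm_smul, Real.norm_eq_abs]
    have h4 : ‖x n - a‖ = f n := by rw [← dist_eq_norm]
    rw [h4, hu1, mul_one, sq_abs]
    ring
  have hdec : ∀ n m : ℕ, ⟪x n - a, x m - a⟫ = K n * K m + ⟪v n, v m⟫ := by
    intro n m
    rw [hxv n, hxv m, inner_add_left, inner_add_right, inner_add_right,
      real_inner_smul_left, real_inner_smul_left, real_inner_smul_right,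
      real_inner_smul_right, huu, real_inner_comm u (v n), hvu, hvu]
    ring
  have hr : Tendsto (fun n => K n / f n) (φ : Filter ℕ) (nhds 1) := by
    have t1 : Tendsto (fun n => ⟪u, (f n)⁻¹ • (x n - a)⟫) (φ : Filter ℕ)
        (nhds ⟪u, u⟫) := tendsto_const_nhds.inner hu2
    have he : ∀ n : ℕ, ⟪u, (f n)⁻¹ • (x n - a)⟫ = K n / f n := by
      intro n
      rw [real_inner_smul_right, hKu, div_eq_inv_mul]
    rw [← huu]
    exact t1.congr he
  have hvv : ∀ m : ℕ, ∀ᶠ n in (φ : Filter ℕ),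
      ⟪v n, v m⟫ = K m * (f n - K n) + ‖v m‖ ^ 2 / 2 := by
    intro m
    filter_upwards [star (x m) (K m) (hKd m)] with n hn
    have h1 : dist (x m) a = f m := rfl
    rw [h1] at hn
    have h2 := hdec n m
    have h3 := hvsq m
    linear_combination hn - h2 - h3 / 2
  have hKhalf : ∀ᶠ n in (φ : Filter ℕ), 1/2 ≤ K n / f n :=
    hr.eventually (eventually_ge_nhds (by norm_num))
  have hKge : ∀ᶠ n in (φ : Filter ℕ), f n / 2 ≤ K n := by
    filter_upwards [hKhalf] with n hn
    have h := mul_le_mul_of_nonneg_right hn (hfpos n).le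
    rw [div_mul_cancel₀ _ (hfpos n).ne'] at h
    linarith
  -- q n := ‖v n‖ / f n tends to 0
  have hqsqrt : ∀ n : ℕ, ‖v n‖ / f n = Real.sqrt (1 - (K n / f n) ^ 2) := by
    intro n
    have h1 : ‖v n‖ / f n = Real.sqrt ((‖v n‖ / f n) ^ 2) :=
      (Real.sqrt_sq (by positivity)).symm
    rw [h1]
    congr 1
    rw [div_pow, hvsq n]
    have hf0 : f n ≠ 0 := (hfpos n).ne'
    field_simp
  have hq0 : Tendsto (fun n => ‖v n‖ / f n) (φ : Filter ℕ) (nhds 0) := by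
    have h2 : Tendsto (fun n => 1 - (K n / f n) ^ 2) (φ : Filter ℕ) (nhds 0) := by
      have := tendsto_const_nhds (x := (1:ℝ)) (f := (φ : Filter ℕ)) |>.sub (hr.pow 2)
      simpa using this
    have h3 := (Real.continuous_sqrt.tendsto 0).comp h2
    rw [Real.sqrt_zero] at h3
    exact Tendsto.congr (fun n => (hqsqrt n).symm) h3
  by_cases hS : {n : ℕ | v n ≠ 0} ∈ (φ : Filter ℕ)
  · exfalso
    have hSe : ∀ᶠ n in (φ : Filter ℕ), v n ≠ 0 := hS
    have hg1 : ∀ᶠ n in (φ : Filter ℕ), 1 ≤ f n - K n := by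
      filter_upwards [hSe] with n hvn
      obtain ⟨z1, hz1⟩ := hfint n
      obtain ⟨z2, hz2⟩ := hKz n
      have h1 : 0 < ‖v n‖ ^ 2 := pow_pos (norm_pos_iff.mpr hvn) 2
      rw [hvsq n] at h1
      obtain ⟨hk1, hk2⟩ := abs_le.mp (hKf n)
      have hpos : 0 < f n - K n := by nlinarith [hfpos n]
      have hz : f n - K n = ((z1 - z2 : ℤ) : ℝ) := by push_cast; rw [← hz1, ← hz2]
      rw [hz] at hpos ⊢
      have : (0 : ℤ) < z1 - z2 := by exact_mod_cast hpos
      exact_mod_cast this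
    set e : ℕ → EuclideanSpace ℝ (Fin d) :=
      fun n => if h : v n = 0 then u else ‖v n‖⁻¹ • v n with he
    have hen : ∀ n : ℕ, ‖e n‖ = 1 := by
      intro n
      by_cases h : v n = 0
      · simp only [he, dif_pos h]; exact hu1
      · simp only [he, dif_neg h]
        rw [norm_smul, Real.norm_eq_abs,
          abs_of_pos (inv_pos.mpr (norm_pos_iff.mpr h))]
        exact inv_mul_cancel₀ (norm_pos_iff.mpr h).ne'
    obtain ⟨w, hw1, hw2⟩ := ultra_lim_mem
      (isCompact_sphere (0 : EuclideanSpace ℝ (Fin d)) 1) φ (g := e)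
      (Eventually.of_forall fun n => by rw [mem_sphere_zero_iff_norm]; exact hen n)
    rw [mem_sphere_zero_iff_norm] at hw1
    have hvtop : Tendsto (fun n => ‖v n‖) (φ : Filter ℕ) atTop := by
      rw [tendsto_atTop]
      intro b
      filter_upwards [hftop.eventually_ge_atTop (max b 1 * max b 1), hg1, hKge]
        with n h1 h2 h3
      have hK0 : 0 ≤ K n := by linarith [hfpos n]
      have hv2 : max b 1 * max b 1 ≤ ‖v n‖ ^ 2 := by
        rw [hvsq n]
        nlinarith [hfpos n]
      have hMpos : (0:ℝ) < max b 1 := lt_of_lt_of_le zero_lt_one (le_max_right b 1)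
      by_contra hlt
      push_neg at hlt
      have hlt2 : ‖v n‖ < max b 1 := lt_of_lt_of_le hlt (le_max_left b 1)
      have hmm := mul_lt_mul' hlt2.le hlt2 (norm_nonneg (v n)) hMpos
      rw [pow_two] at hv2
      linarith
    have hwv : ∀ m : ℕ, ⟪w, v m⟫ = 0 := by
      intro m
      have t1 : Tendsto (fun n => ⟪e n, v m⟫) (φ : Filter ℕ) (nhds ⟪w, v m⟫) :=
        hw2.inner tendsto_const_nhds
      have t2 : Tendsto (fun n => ⟪e n, v m⟫) (φ : Filter ℕ) (nhds 0) := by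
        have hbd : ∀ᶠ n in (φ : Filter ℕ), ‖⟪e n, v m⟫‖
            ≤ |K m| * (‖v n‖ / f n) + (‖v m‖ ^ 2 / 2) * ‖v n‖⁻¹ := by
          filter_upwards [hSe, hg1, hKge, hvv m] with n hvn hgn hKn hid
          have hvpos : 0 < ‖v n‖ := norm_pos_iff.mpr hvn
          have hK0 : 0 ≤ K n := by linarith [hfpos n]
          have he' : e n = ‖v n‖⁻¹ • v n := by simp only [he]; rw [dif_neg hvn]
          have hval : ⟪e n, v m⟫ = ‖v n‖⁻¹ * ⟪v n, v m⟫ := by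
            rw [he']; exact real_inner_smul_left _ _ _
          rw [Real.norm_eq_abs, hval, hid]
          have hinv : (0:ℝ) ≤ ‖v n‖⁻¹ := inv_nonneg.mpr hvpos.le
          have habs : |‖v n‖⁻¹ * (K m * (f n - K n) + ‖v m‖ ^ 2 / 2)|
              ≤ ‖v n‖⁻¹ * (|K m| * (f n - K n) + ‖v m‖ ^ 2 / 2) := by
            rw [abs_mul, abs_of_nonneg hinv]
            refine mul_le_mul_of_nonneg_left ?_ hinv
            calc |K m * (f n - K n) + ‖v m‖ ^ 2 / 2|
                ≤ |K m * (f n - K n)| + |‖v m‖ ^ 2 / 2| := abs_add_le _ _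
              _ = |K m| * (f n - K n) + ‖v m‖ ^ 2 / 2 := by
                  rw [abs_mul, abs_of_nonneg (by linarith : (0:ℝ) ≤ f n - K n),
                    abs_of_nonneg (by positivity : (0:ℝ) ≤ ‖v m‖ ^ 2 / 2)]
          refine habs.trans ?_
          have hcore : ‖v n‖⁻¹ * (f n - K n) ≤ ‖v n‖ / f n := by
            rw [inv_mul_eq_div, div_le_div_iff₀ hvpos (hfpos n)]
            have hvv2 : ‖v n‖ * ‖v n‖ = f n ^ 2 - K n ^ 2 := by
              rw [← sq]; exact hvsq n
            rw [hvv2]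
            nlinarith [mul_nonneg hK0 (by linarith : (0:ℝ) ≤ f n - K n)]
          calc ‖v n‖⁻¹ * (|K m| * (f n - K n) + ‖v m‖ ^ 2 / 2)
              = |K m| * (‖v n‖⁻¹ * (f n - K n)) + (‖v m‖ ^ 2 / 2) * ‖v n‖⁻¹ := by ring
            _ ≤ |K m| * (‖v n‖ / f n) + (‖v m‖ ^ 2 / 2) * ‖v n‖⁻¹ := by
                have := mul_le_mul_of_nonneg_left hcore (abs_nonneg (K m))
                linarith
        have hB : Tendsto (fun n => |K m| * (‖v n‖ / f n) + (‖v m‖ ^ 2 / 2) * ‖v n‖⁻¹)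
            (φ : Filter ℕ) (nhds 0) := by
          have l2 : Tendsto (fun n => ‖v n‖⁻¹) (φ : Filter ℕ) (nhds 0) :=
            hvtop.inv_tendsto_atTop
          simpa using (tendsto_const_nhds.mul hq0).add (tendsto_const_nhds.mul l2)
        exact squeeze_zero_norm' hbd hB
      exact tendsto_nhds_unique t1 t2
    have t3 : Tendsto (fun m => ⟪w, e m⟫) (φ : Filter ℕ) (nhds ⟪w, w⟫) :=
      tendsto_const_nhds.inner hw2
    have t4 : Tendsto (fun m => ⟪w, e m⟫) (φ : Filter ℕ) (nhds 0) := by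
      refine Tendsto.congr' ?_ (tendsto_const_nhds (x := (0:ℝ)))
      filter_upwards [hSe] with m hm
      have he' : e m = ‖v m‖⁻¹ • v m := by simp only [he]; rw [dif_neg hm]
      rw [he', real_inner_smul_right, hwv m, mul_zero]
    have hww : ⟪w, w⟫ = (0:ℝ) := tendsto_nhds_unique t3 t4
    rw [real_inner_self_eq_norm_sq, hw1] at hww
    norm_num at hww
  · have hT : ∀ᶠ n in (φ : Filter ℕ), v n = 0 := by
      have := (Ultrafilter.compl_mem_iff_notMem (f := φ) (s := {n : ℕ | v n ≠ 0})).mpr hS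
      exact (Filter.eventually_iff.mpr this).mono fun n hn => not_not.mp hn
    rw [collinear_iff_of_mem ha]
    refine ⟨u, fun p hp => ?_⟩
    have hipp : ⟪u, p - a⟫ = L p hp := hip p (L p hp) (hLd p hp)
    have hKfe : ∀ᶠ n in (φ : Filter ℕ), K n = f n := by
      filter_upwards [hT, hKge] with n hv0 hKn
      have h1 := hvsq n
      rw [hv0] at h1
      simp only [norm_zero] at h1
      have h1' : (0:ℝ) = f n ^ 2 - K n ^ 2 := by simpa using h1
      nlinarith [hfpos n]
    obtain ⟨n, hv0, hKn, hdn⟩ := (hT.and (hKfe.and (hLd p hp))).exists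
    have hxn : x n - a = f n • u := by
      have h0 : x n - a - K n • u = 0 := hv0
      rw [← hKn]
      exact sub_eq_zero.mp h0
    have h2 : x n - p = f n • u - (p - a) := by rw [← hxn]; abel
    have hnormeq : ‖x n - p‖ ^ 2 = f n ^ 2 - 2 * (f n * (L p hp)) + ‖p - a‖ ^ 2 := by
      rw [h2, norm_sub_sq_real, real_inner_smul_left, hipp, norm_smul,
        Real.norm_eq_abs, hu1, mul_one, sq_abs]
    have h3 : ‖x n - p‖ = f n - L p hp := by rw [← dist_eq_norm]; exact hdn
    rw [h3] at hnormeq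
    have hL2 : (L p hp) ^ 2 = ‖p - a‖ ^ 2 := by linear_combination hnormeq
    have habs2 : |L p hp| = ‖p - a‖ := by
      rw [← Real.sqrt_sq_eq_abs, hL2, Real.sqrt_sq (norm_nonneg _)]
    rcases le_or_gt 0 (L p hp) with hL0 | hL0
    · have hLeq : L p hp = ‖p - a‖ := by rw [← habs2, abs_of_nonneg hL0]
      have hie : ⟪u, p - a⟫ = ‖u‖ * ‖p - a‖ := by
        rw [hipp, hu1, one_mul]; exact hLeq
      have h4 := inner_eq_norm_mul_iff_real.mp hie
      rw [hu1, one_smul] at h4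
      refine ⟨‖p - a‖, ?_⟩
      rw [vadd_eq_add, h4]
      abel
    · have hLeq : -(L p hp) = ‖a - p‖ := by
        rw [norm_sub_rev]; nlinarith [norm_nonneg (p - a)]
      have hie : ⟪u, a - p⟫ = ‖u‖ * ‖a - p‖ := by
        rw [hu1, one_mul, ← hLeq]
        have hh : a - p = -(p - a) := by abel
        rw [hh, inner_neg_right, hipp]
      have h4 := inner_eq_norm_mul_iff_real.mp hie
      rw [hu1, one_smul, ← hLeq] at h4
      refine ⟨L p hp, ?_⟩
      rw [vadd_eq_add]
      rw [neg_smul] at h4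
      have h6 : L p hp • u = p - a := by
        rw [← neg_neg (L p hp • u), h4]; abel
      rw [h6]
      abel
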